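/- arXiv:2308.13009 — 2 statements merged into one kernel-verified Lean document; each statement's English description precedes it below -/
import Mathlib

section
/- Let g : [a, b] → ℝ be convex and differentiable, and let a = x0 < x1 < ... < xn = b be a partition with g'(x_i) ≠ g'(x_{i+1}) for all i. For each i, let T_i be the triangle with vertices (x_i, g(x_i)), (x_{i+1}, g(x_{i+1})), and the intersection v_{i,i+1} of the tangents at x_i and x_{i+1}. Then the convex hull of the union of the triangles T_0, ..., T_{n-1} equals the convex hull of the point set {(x0, g(x0)), (xn, g(xn)), v_{0,1}, ..., v_{n-1,n}}. -/
/-- A point on a line with x-coordinate between two other points on the same line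
lies on the segment between them. -/
lemma aux_seg_12 (c d : ℝ) (p q r : ℝ × ℝ)
    (hp : p.2 = c + d * p.1) (hq : q.2 = c + d * q.1) (hr : r.2 = c + d * r.1)
    (h1 : p.1 ≤ q.1) (h2 : q.1 ≤ r.1) : q ∈ segment ℝ p r := by
  rcases eq_or_lt_of_le (h1.trans h2) with he | hpr
  · have hq1 : q.1 = p.1 := le_antisymm (he ▸ h2) h1
    have : q = p := by
      have : q.2 = p.2 := by rw [hq, hp, hq1]
      exact Prod.ext hq1 this
    rw [this]; exact left_mem_segment ℝ p r
  · set θ : ℝ := (q.1 - p.1) / (r.1 - p.1) with hθ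
    have hd : (0:ℝ) < r.1 - p.1 := by linarith
    have hθ0 : 0 ≤ θ := div_nonneg (by linarith) hd.le
    have hθ1 : θ ≤ 1 := by rw [div_le_one hd]; linarith
    have hfst : (1 - θ) * p.1 + θ * r.1 = q.1 := by
      have : θ * (r.1 - p.1) = q.1 - p.1 := div_mul_cancel₀ _ hd.ne'
      nlinarith [this]
    refine ⟨1 - θ, θ, by linarith, hθ0, by ring, ?_⟩
    have : ((1 - θ) • p + θ • r) = ((1 - θ) * p.1 + θ * r.1, (1 - θ) * p.2 + θ * r.2) := by
      simp [Prod.ext_iff]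
    rw [this]
    refine Prod.ext hfst ?_
    simp only [hp, hr, hq]
    linear_combination d * hfst

theorem stmt_12 (a b : ℝ) (g g' : ℝ → ℝ) (n : ℕ) (hn : 0 < n)
    (xs : Fin (n + 1) → ℝ) (hmono : StrictMono xs)
    (hxa : xs 0 = a) (hxb : xs (Fin.last n) = b)
    (hconv : ConvexOn ℝ (Set.Icc a b) g)
    (hderiv : ∀ x ∈ Set.Icc a b, HasDerivAt g (g' x) x)
    (hne : ∀ i : Fin n, g' (xs i.castSucc) ≠ g' (xs i.succ))
    (v : Fin n → ℝ × ℝ)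
    (hv : ∀ i : Fin n,
      (v i).2 = g (xs i.castSucc) + g' (xs i.castSucc) * ((v i).1 - xs i.castSucc) ∧
      (v i).2 = g (xs i.succ) + g' (xs i.succ) * ((v i).1 - xs i.succ)) :
    convexHull ℝ
        (⋃ i : Fin n,
          convexHull ℝ
            ({(xs i.castSucc, g (xs i.castSucc)), (xs i.succ, g (xs i.succ)),
              v i} : Set (ℝ × ℝ)))
      = convexHull ℝ (({(a, g a), (b, g b)} : Set (ℝ × ℝ)) ∪ Set.range v) := by
  subst hxa; subst hxb
  have hmemIcc : ∀ j : Fin (n+1), xs j ∈ Set.Icc (xs 0) (xs (Fin.last n)) :=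
    fun j => ⟨hmono.monotone (Fin.zero_le j), hmono.monotone (Fin.le_last j)⟩
  have hlt : ∀ i : Fin n, xs i.castSucc < xs i.succ := fun i => hmono (Fin.castSucc_lt_succ (i := i))
  -- slope bounds
  have hs1 : ∀ i : Fin n,
      g' (xs i.castSucc) * (xs i.succ - xs i.castSucc) ≤ g (xs i.succ) - g (xs i.castSucc) := by
    intro i
    have h := hconv.le_slope_of_hasDerivAt (hmemIcc i.castSucc) (hmemIcc i.succ) (hlt i)
      (hderiv _ (hmemIcc i.castSucc))
    rw [slope_def_field] at h
    have hd : (0:ℝ) < xs i.succ - xs i.castSucc := by linarith [hlt i]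
    calc g' (xs i.castSucc) * (xs i.succ - xs i.castSucc)
        ≤ ((g (xs i.succ) - g (xs i.castSucc)) / (xs i.succ - xs i.castSucc)) *
            (xs i.succ - xs i.castSucc) := by
          exact mul_le_mul_of_nonneg_right h hd.le
      _ = g (xs i.succ) - g (xs i.castSucc) := div_mul_cancel₀ _ hd.ne'
  have hs2 : ∀ i : Fin n,
      g (xs i.succ) - g (xs i.castSucc) ≤ g' (xs i.succ) * (xs i.succ - xs i.castSucc) := by
    intro i
    have h := hconv.slope_le_of_hasDerivAt (hmemIcc i.castSucc) (hmemIcc i.succ) (hlt i)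
      (hderiv _ (hmemIcc i.succ))
    rw [slope_def_field] at h
    have hd : (0:ℝ) < xs i.succ - xs i.castSucc := by linarith [hlt i]
    calc g (xs i.succ) - g (xs i.castSucc)
        = ((g (xs i.succ) - g (xs i.castSucc)) / (xs i.succ - xs i.castSucc)) *
            (xs i.succ - xs i.castSucc) := (div_mul_cancel₀ _ hd.ne').symm
      _ ≤ g' (xs i.succ) * (xs i.succ - xs i.castSucc) :=
          mul_le_mul_of_nonneg_right h hd.le
  have hdlt : ∀ i : Fin n, g' (xs i.castSucc) < g' (xs i.succ) := by
    intro i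
    refine lt_of_le_of_ne ?_ (hne i)
    have hd : (0:ℝ) < xs i.succ - xs i.castSucc := by linarith [hlt i]
    nlinarith [hs1 i, hs2 i]
  -- v i lies between x_i and x_{i+1}
  have key : ∀ i : Fin n, xs i.castSucc ≤ (v i).1 ∧ (v i).1 ≤ xs i.succ := by
    intro i
    obtain ⟨h1, h2⟩ := hv i
    have hd := hdlt i
    constructor
    · nlinarith [hs2 i, hd, h1, h2]
    · nlinarith [hs1 i, hd, h1, h2]
  set S : Set (ℝ × ℝ) :=
    ({(xs 0, g (xs 0)), (xs (Fin.last n), g (xs (Fin.last n)))} : Set (ℝ × ℝ)) ∪ Set.range v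
    with hS
  -- every graph point at a partition node is in the hull of S
  have hgraph : ∀ j : Fin (n+1), (xs j, g (xs j)) ∈ convexHull ℝ S := by
    intro j
    by_cases h0 : j = 0
    · subst h0; exact subset_convexHull ℝ S (Or.inl (Or.inl rfl))
    by_cases hl : j = Fin.last n
    · subst hl; exact subset_convexHull ℝ S (Or.inl (Or.inr rfl))
    · have hjlt : (j : ℕ) < n := by
        have := Fin.lt_last_iff_ne_last.mpr hl
        simpa [Fin.lt_def] using this
      set i : Fin n := j.pred h0 with hi
      set k : Fin n := ⟨j, hjlt⟩ with hk
      have hji : i.succ = j := Fin.succ_pred j h0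
      have hjk : k.castSucc = j := by
        apply Fin.ext; simp [hk]
      -- the three points are on the tangent line at xs j
      have hLi : (v i).2 = (g (xs j) - g' (xs j) * xs j) + g' (xs j) * (v i).1 := by
        have := (hv i).2; rw [hji] at this; rw [this]; ring
      have hRk : (v k).2 = (g (xs j) - g' (xs j) * xs j) + g' (xs j) * (v k).1 := by
        have := (hv k).1; rw [hjk] at this; rw [this]; ring
      have hmid : ((xs j, g (xs j)) : ℝ × ℝ).2 =
          (g (xs j) - g' (xs j) * xs j) + g' (xs j) * ((xs j, g (xs j)) : ℝ × ℝ).1 := by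
        simp
      have hb1 : (v i).1 ≤ xs j := by have := (key i).2; rwa [hji] at this
      have hb2 : xs j ≤ (v k).1 := by have := (key k).1; rwa [hjk] at this
      have hseg : ((xs j, g (xs j)) : ℝ × ℝ) ∈ segment ℝ (v i) (v k) :=
        aux_seg_12 (g (xs j) - g' (xs j) * xs j) (g' (xs j)) _ _ _ hLi hmid hRk hb1 hb2
      have hvi : v i ∈ convexHull ℝ S := subset_convexHull ℝ S (Or.inr ⟨i, rfl⟩)
      have hvk : v k ∈ convexHull ℝ S := subset_convexHull ℝ S (Or.inr ⟨k, rfl⟩)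
      exact (convex_convexHull ℝ S).segment_subset hvi hvk hseg
  apply Set.Subset.antisymm
  · apply convexHull_min _ (convex_convexHull ℝ S)
    apply Set.iUnion_subset
    intro i
    apply convexHull_min _ (convex_convexHull ℝ S)
    intro p hp
    rcases hp with rfl | rfl | rfl
    · exact hgraph i.castSucc
    · exact hgraph i.succ
    · exact subset_convexHull ℝ S (Or.inr ⟨i, rfl⟩)
  · apply convexHull_min _ (convex_convexHull ℝ _)
    intro p hp
    apply subset_convexHull
    rcases hp with (rfl | rfl) | ⟨i, rfl⟩
    · refine Set.mem_iUnion.mpr ⟨⟨0, hn⟩, ?_⟩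
      apply subset_convexHull
      left
      have : (⟨0, hn⟩ : Fin n).castSucc = 0 := rfl
      rw [this]
    · refine Set.mem_iUnion.mpr ⟨⟨n - 1, Nat.sub_lt hn one_pos⟩, ?_⟩
      apply subset_convexHull
      right; left
      have : (⟨n - 1, Nat.sub_lt hn one_pos⟩ : Fin n).succ = Fin.last n := by
        apply Fin.ext
        simp [Nat.succ_pred_eq_of_pos hn]
        omega
      rw [this]
    · refine Set.mem_iUnion.mpr ⟨i, ?_⟩
      apply subset_convexHull
      right; right; rfl
end

section
/- Let g : [a, b] → ℝ be convex and differentiable with partition a = x0 < ... < xn = b satisfying g'(x_i) ≠ g'(x_{i+1}). Every graph point (x, g(x)), x ∈ [a, b], lies in the convex hull of {(x0, g(x0)), (xn, g(xn))} ∪ {v_{0,1}, ..., v_{n-1,n}}, where v_{i,i+1} is the intersection of the tangents to g at x_i and x_{i+1}. -/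
lemma mem_segment_of_ratio (p q r : ℝ × ℝ) (t : ℝ) (h0 : 0 ≤ t) (h1 : t ≤ 1)
    (hx : r.1 = (1-t)*p.1 + t*q.1) (hy : r.2 = (1-t)*p.2 + t*q.2) :
    r ∈ segment ℝ p q := by
  refine ⟨1-t, t, by linarith, h0, by ring, ?_⟩
  have : ((1-t)•p + t•q : ℝ×ℝ) = ((1-t)*p.1 + t*q.1, (1-t)*p.2 + t*q.2) := by
    simp [Prod.ext_iff, smul_eq_mul]
  rw [this, Prod.ext_iff]
  exact ⟨hx.symm, hy.symm⟩

lemma lineSeg (m c : ℝ) (p q : ℝ × ℝ) (x y : ℝ) (h1 : p.1 ≤ x) (h2 : x ≤ q.1)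
    (hp : p.2 = c + m*p.1) (hq : q.2 = c + m*q.1) (hy : y = c + m*x) :
    ((x, y) : ℝ × ℝ) ∈ segment ℝ p q := by
  rcases eq_or_lt_of_le (h1.trans h2) with he | hlt
  · have hx : x = p.1 := le_antisymm (he ▸ h2) h1
    have : ((x, y) : ℝ × ℝ) = p := by
      rw [Prod.ext_iff]; exact ⟨hx, by rw [hy, hp, hx]⟩
    rw [this]; exact left_mem_segment ℝ p q
  · have hne : q.1 - p.1 ≠ 0 := by linarith
    refine mem_segment_of_ratio p q _ ((x - p.1)/(q.1 - p.1))
      (div_nonneg (by linarith) (by linarith))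
      ((div_le_one (by linarith)).mpr (by linarith)) ?_ ?_
    · field_simp; ring
    · simp only [hy, hp, hq]; field_simp; ring

lemma vertSeg (x y1 y y2 : ℝ) (h1 : y1 ≤ y) (h2 : y ≤ y2) :
    ((x, y) : ℝ × ℝ) ∈ segment ℝ (x, y1) (x, y2) := by
  rcases eq_or_lt_of_le (h1.trans h2) with he | hlt
  · have : y = y1 := le_antisymm (he ▸ h2) h1
    rw [this]; exact left_mem_segment ℝ _ _
  · refine mem_segment_of_ratio _ _ _ ((y - y1)/(y2 - y1))
      (div_nonneg (by linarith) (by linarith))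
      ((div_le_one (by linarith)).mpr (by linarith)) (by ring) ?_
    show y = _ * y1 + _ * y2
    have hne : y2 - y1 ≠ 0 := by linarith
    field_simp
    ring

lemma tangent_le (a b : ℝ) (g g' : ℝ → ℝ)
    (hconv : ConvexOn ℝ (Set.Icc a b) g)
    (hderiv : ∀ x ∈ Set.Icc a b, HasDerivAt g (g' x) x)
    (p q : ℝ) (hp : p ∈ Set.Icc a b) (hq : q ∈ Set.Icc a b) :
    g p + g' p * (q - p) ≤ g q := by
  rcases lt_trichotomy p q with h | h | h
  · have hs := hconv.le_slope_of_hasDerivAt hp hq h (hderiv p hp)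
    rw [slope_def_field] at hs
    have := (le_div_iff₀ (by linarith : (0:ℝ) < q - p)).mp hs
    linarith
  · subst h; simp
  · have hs := hconv.slope_le_of_hasDerivAt hq hp h (hderiv p hp)
    rw [slope_def_field] at hs
    have := (div_le_iff₀ (by linarith : (0:ℝ) < p - q)).mp hs
    nlinarith

lemma tbound (u w t gu gw du dw : ℝ)
    (E : gu + du*(t-u) = gw + dw*(t-w))
    (tu : gu + du*(w-u) ≤ gw) (tw : gw + dw*(u-w) ≤ gu) (hd : du < dw) :
    u ≤ t ∧ t ≤ w := by
  constructor
  · by_contra h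
    push_neg at h
    nlinarith [mul_pos (sub_pos.mpr hd) (sub_pos.mpr h)]
  · by_contra h
    push_neg at h
    nlinarith [mul_pos (sub_pos.mpr hd) (sub_pos.mpr h)]

lemma interval_mem (a b u w : ℝ) (g g' : ℝ → ℝ)
    (hconv : ConvexOn ℝ (Set.Icc a b) g)
    (hderiv : ∀ x ∈ Set.Icc a b, HasDerivAt g (g' x) x)
    (hu : u ∈ Set.Icc a b) (hw : w ∈ Set.Icc a b) (huw : u < w)
    (V : ℝ × ℝ)
    (hV1 : V.2 = g u + g' u * (V.1 - u)) (hV2 : V.2 = g w + g' w * (V.1 - w))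
    (ht1 : u ≤ V.1) (ht2 : V.1 ≤ w)
    (H : Set (ℝ × ℝ)) (hH : Convex ℝ H)
    (hPu : ((u, g u) : ℝ × ℝ) ∈ H) (hPw : ((w, g w) : ℝ × ℝ) ∈ H) (hVH : V ∈ H)
    (x : ℝ) (hx : x ∈ Set.Icc u w) : ((x, g x) : ℝ × ℝ) ∈ H := by
  obtain ⟨hxu, hxw⟩ := hx
  have hxab : x ∈ Set.Icc a b := ⟨hu.1.trans hxu, hxw.trans hw.2⟩
  set lam := (x - u)/(w - u) with hlam
  have hwu : w - u ≠ 0 := by linarith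
  have hl0 : 0 ≤ lam := div_nonneg (by linarith) (by linarith)
  have hl1 : lam ≤ 1 := (div_le_one (by linarith)).mpr (by linarith)
  have hxeq : x = (1-lam)*u + lam*w := by rw [hlam]; field_simp; ring
  have hchord : g x ≤ (1-lam)*(g u) + lam*(g w) := by
    have h2 := hconv.2 hu hw (by linarith : (0:ℝ) ≤ 1-lam) hl0 (by ring)
    rw [smul_eq_mul, smul_eq_mul, smul_eq_mul, smul_eq_mul, ← hxeq] at h2
    exact h2
  have hC : ((x, (1-lam)*(g u) + lam*(g w)) : ℝ × ℝ) ∈ H :=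
    hH.segment_subset hPu hPw (mem_segment_of_ratio _ _ _ lam hl0 hl1 hxeq rfl)
  rcases le_total x V.1 with hxt | htx
  · have hT : ((x, g u + g' u * (x - u)) : ℝ × ℝ) ∈ H := by
      refine hH.segment_subset hPu hVH
        (lineSeg (g' u) (g u - g' u * u) (u, g u) V x _ hxu hxt ?_ ?_ ?_)
      · show g u = _; ring
      · rw [hV1]; ring
      · ring
    have hgt : g u + g' u * (x - u) ≤ g x := tangent_le a b g g' hconv hderiv u x hu hxab
    exact hH.segment_subset hT hC (vertSeg x _ _ _ hgt hchord)
  · have hT : ((x, g w + g' w * (x - w)) : ℝ × ℝ) ∈ H := by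
      refine hH.segment_subset hVH hPw
        (lineSeg (g' w) (g w - g' w * w) V (w, g w) x _ htx hxw ?_ ?_ ?_)
      · rw [hV2]; ring
      · show g w = _; ring
      · ring
    have hgt : g w + g' w * (x - w) ≤ g x := tangent_le a b g g' hconv hderiv w x hw hxab
    exact hH.segment_subset hT hC (vertSeg x _ _ _ hgt hchord)

theorem stmt_13 (a b : ℝ) (g g' : ℝ → ℝ) (n : ℕ) (hn : 0 < n)
    (xs : Fin (n + 1) → ℝ) (hmono : StrictMono xs)
    (hxa : xs 0 = a) (hxb : xs (Fin.last n) = b)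
    (hconv : ConvexOn ℝ (Set.Icc a b) g)
    (hderiv : ∀ x ∈ Set.Icc a b, HasDerivAt g (g' x) x)
    (hne : ∀ i : Fin n, g' (xs i.castSucc) ≠ g' (xs i.succ))
    (v : Fin n → ℝ × ℝ)
    (hv : ∀ i : Fin n,
      (v i).2 = g (xs i.castSucc) + g' (xs i.castSucc) * ((v i).1 - xs i.castSucc) ∧
      (v i).2 = g (xs i.succ) + g' (xs i.succ) * ((v i).1 - xs i.succ)) :
    ∀ x ∈ Set.Icc a b,
      ((x, g x) : ℝ × ℝ) ∈
        convexHull ℝ (({(a, g a), (b, g b)} : Set (ℝ × ℝ)) ∪ Set.range v) := by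
  intro x hx
  set S : Set (ℝ × ℝ) := ({(a, g a), (b, g b)} : Set (ℝ × ℝ)) ∪ Set.range v with hS
  set H := convexHull ℝ S with hHdef
  have hHc : Convex ℝ H := convex_convexHull ℝ S
  have hSH : S ⊆ H := subset_convexHull ℝ S
  have hIcc : ∀ j : Fin (n+1), xs j ∈ Set.Icc a b := fun j =>
    ⟨hxa ▸ hmono.monotone (Fin.zero_le j), hxb ▸ hmono.monotone (Fin.le_last j)⟩
  have hlt : ∀ i : Fin n, xs i.castSucc < xs i.succ :=
    fun i => hmono (Fin.castSucc_lt_succ (i := i))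
  have hdlt : ∀ i : Fin n, g' (xs i.castSucc) < g' (xs i.succ) := by
    intro i
    refine lt_of_le_of_ne ?_ (hne i)
    exact le_trans
      (hconv.le_slope_of_hasDerivAt (hIcc _) (hIcc _) (hlt i) (hderiv _ (hIcc _)))
      (hconv.slope_le_of_hasDerivAt (hIcc _) (hIcc _) (hlt i) (hderiv _ (hIcc _)))
  have hvb : ∀ i : Fin n, xs i.castSucc ≤ (v i).1 ∧ (v i).1 ≤ xs i.succ := by
    intro i
    exact tbound (xs i.castSucc) (xs i.succ) ((v i).1) _ _ _ _
      ((hv i).1.symm.trans (hv i).2)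
      (tangent_le a b g g' hconv hderiv _ _ (hIcc _) (hIcc _))
      (tangent_le a b g g' hconv hderiv _ _ (hIcc _) (hIcc _))
      (hdlt i)
  have hPH : ∀ j : Fin (n+1), ((xs j, g (xs j)) : ℝ × ℝ) ∈ H := by
    intro j
    by_cases hj0 : j = 0
    · subst hj0; rw [hxa]; exact hSH (Or.inl (Set.mem_insert _ _))
    · by_cases hjl : j = Fin.last n
      · subst hjl; rw [hxb]; exact hSH (Or.inl (Set.mem_insert_of_mem _ rfl))
      · obtain ⟨i, rfl⟩ := Fin.exists_succ_eq_of_ne_zero hj0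
        obtain ⟨i', hii'⟩ := Fin.exists_castSucc_eq.mpr hjl
        refine hHc.segment_subset (hSH (Or.inr ⟨i, rfl⟩)) (hSH (Or.inr ⟨i', rfl⟩))
          (lineSeg (g' (xs i.succ)) (g (xs i.succ) - g' (xs i.succ) * xs i.succ)
            (v i) (v i') (xs i.succ) _ (hvb i).2 ?_ ?_ ?_ ?_)
        · rw [← hii']; exact (hvb i').1
        · rw [(hv i).2]; ring
        · rw [(hv i').1, hii']; ring
        · ring
  classical
  set F := Finset.univ.filter (fun i : Fin n => xs i.castSucc ≤ x) with hF
  have hzero : ((⟨0, hn⟩ : Fin n).castSucc : Fin (n+1)) = 0 := rfl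
  have hFne : F.Nonempty := ⟨⟨0, hn⟩, by
    simp only [hF, Finset.mem_filter, Finset.mem_univ, true_and, hzero, hxa]
    exact hx.1⟩
  set i := F.max' hFne with hi
  have hiF := F.max'_mem hFne
  have hile : xs i.castSucc ≤ x := by
    simpa only [hF, Finset.mem_filter, Finset.mem_univ, true_and] using hiF
  have hige : x ≤ xs i.succ := by
    by_contra hcon
    push_neg at hcon
    rcases lt_or_eq_of_le (Nat.succ_le_of_lt i.isLt) with h | h
    · have hmem : (⟨i.val+1, h⟩ : Fin n) ∈ F := by
        simp only [hF, Finset.mem_filter, Finset.mem_univ, true_and]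
        have hcs : ((⟨i.val+1, h⟩ : Fin n).castSucc : Fin (n+1)) = i.succ := rfl
        rw [hcs]; exact hcon.le
      have hle := F.le_max' _ hmem
      rw [← hi] at hle
      have h2 : i < (⟨i.val+1, h⟩ : Fin n) := by simp [Fin.lt_def]
      exact absurd hle (not_le.mpr h2)
    · have hl : i.succ = Fin.last n := by
        apply Fin.ext; simpa using h
      rw [hl, hxb] at hcon
      exact absurd hx.2 (not_le.mpr hcon)
  exact interval_mem a b (xs i.castSucc) (xs i.succ) g g' hconv hderiv (hIcc _) (hIcc _)
    (hlt i) (v i) (hv i).1 (hv i).2 (hvb i).1 (hvb i).2 H hHc (hPH _) (hPH _)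
    (hSH (Or.inr ⟨i, rfl⟩)) x ⟨hile, hige⟩
end
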